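/- arXiv:2503.11370 — 4 statements merged into one kernel-verified Lean document; each statement's English description precedes it below -/
import Mathlib

section
/- Let m, r ∈ ℕ, k ≥ 0, and let ζ ∈ C^{r−1}(I, ℝ^m) on an interval I ⊂ ℝ_{≥0}. Then for all t ∈ I, ξ_r(χ(ζ)(t)) = ζ^{(r−1)}(t) + Σ_{j=1}^{r−1} k · (d/dt)^{r−j−1} [ ξ_j(χ(ζ)(t)) ], where all the indicated derivatives exist. -/
open Set Finset

/-- The auxiliary error variables, `xi m k i` is `ξ_{i+1}` (0-based indexing):
`ξ₁(z) = z₁`, `ξ_{i+1}(z) = ξ_i(σ(z)) + k ξ_i(z)` where `σ` is the left shift. -/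
noncomputable def xi (m : ℕ) (k : ℝ) : ℕ → (ℕ → EuclideanSpace ℝ (Fin m)) → EuclideanSpace ℝ (Fin m)
  | 0, z => z 0
  | i + 1, z => xi m k i (fun j => z (j + 1)) + k • xi m k i z

/-- `chiFam m r dζ t = χ(ζ)(t) = (ζ(t), ζ'(t), …, ζ^{(r−1)}(t)) ∈ ℝ^{rm}`,
where `dζ j = ζ^{(j)}`; entries beyond index `r` are padded by zero. -/
noncomputable def chiFam (m r : ℕ) (dζ : ℕ → ℝ → EuclideanSpace ℝ (Fin m)) (t : ℝ) :
    ℕ → EuclideanSpace ℝ (Fin m) :=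
  fun j => if j < r then dζ j t else 0

lemma hasDeriv_xi (m r : ℕ) (k : ℝ) (I : Set ℝ)
    (dζ : ℕ → ℝ → EuclideanSpace ℝ (Fin m))
    (hder : ∀ j, j + 1 < r → ∀ t ∈ I, HasDerivWithinAt (dζ j) (dζ (j + 1) t) I t) :
    ∀ i l, i + l + 1 < r → ∀ t ∈ I,
      HasDerivWithinAt (fun s => xi m k i (fun j => chiFam m r dζ s (j + l)))
        (xi m k i (fun j => chiFam m r dζ t (j + l + 1))) I t := by
  intro i
  induction i with
  | zero =>
    intro l hl t ht
    have h1 : l < r := by omega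
    have h2 : l + 1 < r := by omega
    have e1 : (fun s => xi m k 0 (fun j => chiFam m r dζ s (j + l))) = dζ l := by
      funext s; simp [xi, chiFam, h1]
    have e2 : xi m k 0 (fun j => chiFam m r dζ t (j + l + 1)) = dζ (l + 1) t := by
      simp [xi, chiFam, h2]
    rw [e1, e2]
    exact hder l h2 t ht
  | succ i ih =>
    intro l hl t ht
    have e1 : ∀ s, xi m k (i + 1) (fun j => chiFam m r dζ s (j + l)) =
        xi m k i (fun j => chiFam m r dζ s (j + (l + 1))) +
          k • xi m k i (fun j => chiFam m r dζ s (j + l)) := by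
      intro s
      have e : (fun j => chiFam m r dζ s (j + 1 + l)) =
          (fun j => chiFam m r dζ s (j + (l + 1))) :=
        funext fun j => congrArg _ (by omega)
      show xi m k i (fun j => chiFam m r dζ s (j + 1 + l)) + _ = _
      rw [e]
    have e2 : xi m k (i + 1) (fun j => chiFam m r dζ t (j + l + 1)) =
        xi m k i (fun j => chiFam m r dζ t (j + (l + 1) + 1)) +
          k • xi m k i (fun j => chiFam m r dζ t (j + l + 1)) := by
      have e : (fun j => chiFam m r dζ t (j + 1 + (l + 1))) =
          (fun j => chiFam m r dζ t (j + (l + 1) + 1)) :=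
        funext fun j => congrArg _ (by omega)
      show xi m k i (fun j => chiFam m r dζ t (j + 1 + (l + 1))) + _ = _
      rw [e]
    simp only [e1, e2]
    exact (ih (l + 1) (by omega) t ht).add ((ih l (by omega) t ht).const_smul k)

lemma iter_eq (m r : ℕ) (k : ℝ) (I : Set ℝ) (hIuniq : UniqueDiffOn ℝ I)
    (dζ : ℕ → ℝ → EuclideanSpace ℝ (Fin m))
    (hder : ∀ j, j + 1 < r → ∀ t ∈ I, HasDerivWithinAt (dζ j) (dζ (j + 1) t) I t) :
    ∀ n i, i + n < r → ∀ t ∈ I,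
      iteratedDerivWithin n (fun s => xi m k i (chiFam m r dζ s)) I t
        = xi m k i (fun j => chiFam m r dζ t (j + n)) := by
  intro n
  induction n with
  | zero =>
    intro i h t ht
    rfl
  | succ n ih =>
    intro i h t ht
    rw [iteratedDerivWithin_succ]
    have heq : EqOn (iteratedDerivWithin n (fun s => xi m k i (chiFam m r dζ s)) I)
        (fun s => xi m k i (fun j => chiFam m r dζ s (j + n))) I :=
      fun s hs => ih i (by omega) s hs
    rw [derivWithin_congr heq (heq ht)]
    exact (hasDeriv_xi m r k I dζ hder i n (by omega) t ht).derivWithin (hIuniq t ht)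

lemma xi_unroll (m : ℕ) (k : ℝ) : ∀ i (z : ℕ → EuclideanSpace ℝ (Fin m)),
    xi m k i z = z i + ∑ j ∈ Finset.Icc 1 i, k • xi m k (j - 1) (fun p => z (p + (i - j))) := by
  intro i
  induction i with
  | zero => intro z; simp [xi]
  | succ i ih =>
    intro z
    show xi m k i (fun j => z (j + 1)) + k • xi m k i z = _
    rw [ih (fun j => z (j + 1))]
    have hsum : ∑ j ∈ Finset.Icc 1 i, k • xi m k (j - 1) (fun p => z (p + (i - j) + 1)) =
        ∑ j ∈ Finset.Icc 1 i, k • xi m k (j - 1) (fun p => z (p + (i + 1 - j))) := by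
      refine Finset.sum_congr rfl fun j hj => ?_
      have hj' : j ≤ i := (Finset.mem_Icc.mp hj).2
      have e : (fun p => z (p + (i - j) + 1)) = (fun p => z (p + (i + 1 - j))) :=
        funext fun p => congrArg z (by omega)
      rw [e]
    rw [hsum, Finset.sum_Icc_succ_top (by omega : 1 ≤ i + 1)]
    have : (fun p => z (p + (i + 1 - (i + 1)))) = z := by funext p; simp
    rw [this, Nat.add_sub_cancel]
    abel

/-- `ξ_r(χ(ζ)(t)) = ζ^{(r−1)}(t) + Σ_{j=1}^{r−1} k (d/dt)^{r−j−1}[ξ_j(χ(ζ)(t))]`,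
where all the indicated derivatives exist (here `ξ_j = xi m k (j-1)`). -/
theorem stmt5 (m r : ℕ) (hr : 1 ≤ r) (k : ℝ) (hk : 0 ≤ k)
    (I : Set ℝ) (hI0 : I ⊆ Ici (0 : ℝ)) (hIconn : I.OrdConnected) (hIuniq : UniqueDiffOn ℝ I)
    -- ζ ∈ C^{r−1}(I, ℝ^m) with dζ j = ζ^{(j)}:
    (dζ : ℕ → ℝ → EuclideanSpace ℝ (Fin m))
    (hcont : ∀ j, j < r → ContinuousOn (dζ j) I)
    (hder : ∀ j, j + 1 < r → ∀ t ∈ I, HasDerivWithinAt (dζ j) (dζ (j + 1) t) I t) :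
    -- all the indicated derivatives exist:
    (∀ j, 1 ≤ j → j < r → ∀ n, n < r - j - 1 →
      DifferentiableOn ℝ
        (iteratedDerivWithin n (fun s => xi m k (j - 1) (chiFam m r dζ s)) I) I) ∧
    -- the identity:
    ∀ t ∈ I,
      xi m k (r - 1) (chiFam m r dζ t) =
        dζ (r - 1) t + ∑ j ∈ Finset.Icc 1 (r - 1),
          k • iteratedDerivWithin (r - j - 1)
            (fun s => xi m k (j - 1) (chiFam m r dζ s)) I t := by
  constructor
  · intro j hj1 hjr n hn
    have hdiff : DifferentiableOn ℝ
        (fun s => xi m k (j - 1) (fun p => chiFam m r dζ s (p + n))) I := by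
      intro t ht
      exact (hasDeriv_xi m r k I dζ hder (j - 1) n (by omega) t ht).differentiableWithinAt
    refine DifferentiableOn.congr hdiff fun s hs => ?_
    exact iter_eq m r k I hIuniq dζ hder n (j - 1) (by omega) s hs
  · intro t ht
    rw [xi_unroll]
    have h1 : chiFam m r dζ t (r - 1) = dζ (r - 1) t := by
      simp [chiFam, show r - 1 < r by omega]
    rw [h1]
    congr 1
    refine Finset.sum_congr rfl fun j hj => ?_
    have hj' : 1 ≤ j ∧ j ≤ r - 1 := Finset.mem_Icc.mp hj
    rw [iter_eq m r k I hIuniq dζ hder (r - j - 1) (j - 1) (by omega) t ht]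
    have e : (fun p => chiFam m r dζ t (p + (r - 1 - j))) =
        (fun p => chiFam m r dζ t (p + (r - j - 1))) :=
      funext fun p => congrArg _ (by omega)
    rw [e]
end

section
/- Let m, r ∈ ℕ, k ≥ 0, and let ζ ∈ C^{r−1}(I, ℝ^m) on an interval I ⊂ ℝ_{≥0}. Suppose there are constants μ_i^0 > 0, i = 1, …, r, with ‖ξ_i(χ(ζ)(t))‖ ≤ μ_i^0 for all t ∈ I and all i = 1, …, r. Define recursively μ_i^{j+1} := μ_{i+1}^{j} + k μ_i^{j} for i = 1, …, r and j = 0, …, r−i−1. Then for all i = 1, …, r, all j = 0, …, r−i, and all t ∈ I: ‖(d/dt)^j ξ_i(χ(ζ)(t))‖ ≤ μ_i^{j}. -/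
open Set

lemma xi_succ_shift (m : ℕ) (k : ℝ) (n j : ℕ) (w : ℕ → EuclideanSpace ℝ (Fin m)) :
    xi m k (n+1) (fun l => w (l + j)) =
      xi m k n (fun l => w (l + (j+1))) + k • xi m k n (fun l => w (l + j)) := by
  show xi m k n (fun p => w (p + 1 + j)) + _ = _
  have h : (fun p => w (p + 1 + j)) = (fun p => w (p + (j+1))) := by
    funext p; rw [show p + 1 + j = p + (j + 1) from by omega]
  rw [h]

lemma iter_chain {E : Type*} [NormedAddCommGroup E] [NormedSpace ℝ E]
    (I : Set ℝ) (hIuniq : UniqueDiffOn ℝ I) :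
    ∀ (j : ℕ) (f : ℕ → ℝ → E),
      (∀ l, l < j → ∀ t ∈ I, HasDerivWithinAt (f l) (f (l + 1) t) I t) →
      ∀ t ∈ I, iteratedDerivWithin j (f 0) I t = f j t := by
  intro j
  induction j with
  | zero => intro f _ t ht; simp
  | succ j ih =>
    intro f hf t ht
    rw [iteratedDerivWithin_succ]
    have h1 : EqOn (iteratedDerivWithin j (f 0) I) (f j) I :=
      fun s hs => ih f (fun l hl => hf l (Nat.lt_succ_of_lt hl)) s hs
    rw [derivWithin_congr h1 (h1 ht)]
    exact (hf j (Nat.lt_succ_self j) t ht).derivWithin (hIuniq t ht)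

lemma deriv_xi (m r : ℕ) (k : ℝ) (I : Set ℝ)
    (dζ : ℕ → ℝ → EuclideanSpace ℝ (Fin m))
    (hder : ∀ j, j + 1 < r → ∀ t ∈ I, HasDerivWithinAt (dζ j) (dζ (j + 1) t) I t) :
    ∀ n j, n + j + 2 ≤ r → ∀ t ∈ I,
      HasDerivWithinAt (fun s => xi m k n (fun l => chiFam m r dζ s (l + j)))
        (xi m k n (fun l => chiFam m r dζ t (l + (j + 1)))) I t := by
  intro n
  induction n with
  | zero =>
    intro j hjr t ht
    simp only [xi, chiFam, zero_add]
    rw [if_pos (show j + 1 < r by omega)]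
    have hfn : (fun s => if j < r then dζ j s else 0) = dζ j := by
      funext s; rw [if_pos (show j < r by omega)]
    rw [hfn]
    exact hder j (by omega) t ht
  | succ n ih =>
    intro j hjr t ht
    have h1 := ih (j + 1) (by omega) t ht
    have h2 := ih j (by omega) t ht
    have hsum := h1.add (h2.const_smul k)
    have e1 : (fun s => xi m k (n+1) (fun l => chiFam m r dζ s (l + j))) =
        (fun s => xi m k n (fun l => chiFam m r dζ s (l + (j+1)))
          + k • xi m k n (fun l => chiFam m r dζ s (l + j))) := by
      funext s; exact xi_succ_shift m k n j (chiFam m r dζ s)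
    rw [e1, xi_succ_shift m k n (j+1) (chiFam m r dζ t)]
    exact hsum

lemma bound_xi (m r : ℕ) (k : ℝ) (hk : 0 ≤ k) (I : Set ℝ)
    (dζ : ℕ → ℝ → EuclideanSpace ℝ (Fin m)) (μ : ℕ → ℕ → ℝ)
    (hbound0 : ∀ i, 1 ≤ i → i ≤ r → ∀ t ∈ I, ‖xi m k (i - 1) (chiFam m r dζ t)‖ ≤ μ i 0)
    (hμrec : ∀ i j, 1 ≤ i → i ≤ r → j + 1 ≤ r - i → μ i (j + 1) = μ (i + 1) j + k * μ i j) :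
    ∀ j n, n + 1 + j ≤ r → ∀ t ∈ I,
      ‖xi m k n (fun l => chiFam m r dζ t (l + j))‖ ≤ μ (n + 1) j := by
  intro j
  induction j with
  | zero =>
    intro n h t ht
    have := hbound0 (n+1) (by omega) (by omega) t ht
    simpa using this
  | succ j ih =>
    intro n h t ht
    have e : xi m k n (fun l => chiFam m r dζ t (l + (j+1)))
        = xi m k (n+1) (fun l => chiFam m r dζ t (l + j))
          - k • xi m k n (fun l => chiFam m r dζ t (l + j)) := by
      rw [xi_succ_shift m k n j (chiFam m r dζ t)]; abel
    rw [e, hμrec (n+1) j (by omega) (by omega) (by omega)]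
    calc ‖_ - _‖ ≤ ‖xi m k (n+1) (fun l => chiFam m r dζ t (l + j))‖
          + ‖k • xi m k n (fun l => chiFam m r dζ t (l + j))‖ := norm_sub_le _ _
      _ ≤ μ (n+2) j + k * μ (n+1) j := by
          have hb1 := ih (n+1) (by omega) t ht
          have hb2 := ih n (by omega) t ht
          have : ‖k • xi m k n (fun l => chiFam m r dζ t (l + j))‖
              = k * ‖xi m k n (fun l => chiFam m r dζ t (l + j))‖ := by
            rw [norm_smul, Real.norm_eq_abs, abs_of_nonneg hk]
          rw [this]
          have := mul_le_mul_of_nonneg_left hb2 hk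
          have h2 : (n + 1) + 1 = n + 2 := by omega
          rw [h2] at hb1
          linarith

/-- If `‖ξ_i(χ(ζ)(t))‖ ≤ μ_i^0` on `I` and `μ_i^{j+1} = μ_{i+1}^j + k μ_i^j`, then
`‖(d/dt)^j ξ_i(χ(ζ)(t))‖ ≤ μ_i^j` for all `i = 1,…,r`, `j = 0,…,r−i`, `t ∈ I`
(here `ξ_i = xi m k (i-1)` and `μ i j` denotes `μ_i^j`). -/
theorem stmt6 (m r : ℕ) (hr : 1 ≤ r) (k : ℝ) (hk : 0 ≤ k)
    (I : Set ℝ) (hI0 : I ⊆ Ici (0 : ℝ)) (hIconn : I.OrdConnected) (hIuniq : UniqueDiffOn ℝ I)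
    -- ζ ∈ C^{r−1}(I, ℝ^m) with dζ j = ζ^{(j)}:
    (dζ : ℕ → ℝ → EuclideanSpace ℝ (Fin m))
    (hcont : ∀ j, j < r → ContinuousOn (dζ j) I)
    (hder : ∀ j, j + 1 < r → ∀ t ∈ I, HasDerivWithinAt (dζ j) (dζ (j + 1) t) I t)
    (μ : ℕ → ℕ → ℝ)
    (hμpos : ∀ i, 1 ≤ i → i ≤ r → 0 < μ i 0)
    (hbound0 : ∀ i, 1 ≤ i → i ≤ r → ∀ t ∈ I, ‖xi m k (i - 1) (chiFam m r dζ t)‖ ≤ μ i 0)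
    (hμrec : ∀ i j, 1 ≤ i → i ≤ r → j + 1 ≤ r - i → μ i (j + 1) = μ (i + 1) j + k * μ i j) :
    ∀ i j, 1 ≤ i → i ≤ r → j ≤ r - i → ∀ t ∈ I,
      ‖iteratedDerivWithin j (fun s => xi m k (i - 1) (chiFam m r dζ s)) I t‖ ≤ μ i j := by
  intro i j hi1 hir hj t ht
  obtain ⟨n, rfl⟩ : ∃ n, i = n + 1 := ⟨i - 1, by omega⟩
  have hij : n + 1 + j ≤ r := by omega
  have hfn : (fun s => xi m k ((n + 1) - 1) (chiFam m r dζ s))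
      = (fun s => xi m k n (fun l => chiFam m r dζ s (l + 0))) := by
    funext s; simp
  have hEq : iteratedDerivWithin j (fun s => xi m k ((n + 1) - 1) (chiFam m r dζ s)) I t
      = xi m k n (fun l => chiFam m r dζ t (l + j)) := by
    rw [hfn]
    exact iter_chain I hIuniq j
      (fun j' t' => xi m k n (fun l => chiFam m r dζ t' (l + j')))
      (fun l hl t' ht' => deriv_xi m r k I dζ hder n l (by omega) t' ht') t ht
  rw [hEq]
  exact bound_xi m r k hk I dζ μ hbound0 hμrec j n hij t ht
end

section
/- Let m ∈ ℕ, k ≥ 2, c > 0, and let e : [a, b] → ℝ^m be differentiable and v : [a, b] → ℝ^m be such that e'(t) = v(t) − k e(t), ‖v(t)‖ ≤ c, and c/√2 ≤ ‖e(t)‖ ≤ c for all t ∈ [a, b]. Then (d/dt) (½ ‖e(t)‖²) ≤ c² (−k/2 + 1) ≤ 0 for all t ∈ [a, b]; in particular t ↦ ‖e(t)‖² is non-increasing on [a, b] and ‖e(b)‖ ≤ ‖e(a)‖. -/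
open Set

theorem stmt8 (m : ℕ) (k c : ℝ) (hk : 2 ≤ k) (hc : 0 < c)
    (a b : ℝ) (hab : a ≤ b)
    (e v : ℝ → EuclideanSpace ℝ (Fin m))
    -- e'(t) = v(t) − k e(t):
    (hder : ∀ t ∈ Icc a b, HasDerivWithinAt e (v t - k • e t) (Icc a b) t)
    (hv : ∀ t ∈ Icc a b, ‖v t‖ ≤ c)
    (hlb : ∀ t ∈ Icc a b, c / Real.sqrt 2 ≤ ‖e t‖)
    (hub : ∀ t ∈ Icc a b, ‖e t‖ ≤ c) :
    -- (d/dt)(½‖e(t)‖²) ≤ c²(−k/2 + 1) ≤ 0 on [a,b]: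
    (∀ t ∈ Icc a b, ∃ d : ℝ,
      HasDerivWithinAt (fun s => (1 / 2) * ‖e s‖ ^ 2) d (Icc a b) t ∧
      d ≤ c ^ 2 * (-(k / 2) + 1) ∧ c ^ 2 * (-(k / 2) + 1) ≤ 0) ∧
    -- t ↦ ‖e(t)‖² is non-increasing on [a,b]:
    AntitoneOn (fun t => ‖e t‖ ^ 2) (Icc a b) ∧
    ‖e b‖ ≤ ‖e a‖ := by
  have hnpos : c ^ 2 * (-(k / 2) + 1) ≤ 0 := by
    apply mul_nonpos_of_nonneg_of_nonpos (by positivity)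
    linarith
  -- key derivative fact
  have key : ∀ t ∈ Icc a b,
      HasDerivWithinAt (fun s => (1 / 2) * ‖e s‖ ^ 2)
        (inner ℝ (e t) (v t - k • e t) : ℝ) (Icc a b) t := by
    intro t ht
    have h := ((hder t ht).inner ℝ (hder t ht))
    have h2 : HasDerivWithinAt (fun s => (1/2 : ℝ) * (inner ℝ (e s) (e s) : ℝ))
        ((1/2 : ℝ) * ((inner ℝ (e t) (v t - k • e t) : ℝ) + (inner ℝ (v t - k • e t) (e t) : ℝ)))
        (Icc a b) t := h.const_mul _
    have heq : (fun s => (1/2 : ℝ) * (inner ℝ (e s) (e s) : ℝ))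
        = (fun s => (1 / 2 : ℝ) * ‖e s‖ ^ 2) := by
      funext s; rw [real_inner_self_eq_norm_sq]
    rw [heq] at h2
    convert h2 using 1
    rw [real_inner_comm (v t - k • e t) (e t)]
    ring
  have bound : ∀ t ∈ Icc a b,
      (inner ℝ (e t) (v t - k • e t) : ℝ) ≤ c ^ 2 * (-(k / 2) + 1) := by
    intro t ht
    have h1 : (inner ℝ (e t) (v t) : ℝ) ≤ c ^ 2 := by
      calc (inner ℝ (e t) (v t) : ℝ) ≤ ‖e t‖ * ‖v t‖ := real_inner_le_norm _ _
        _ ≤ c * c := by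
            apply mul_le_mul (hub t ht) (hv t ht) (norm_nonneg _) hc.le
        _ = c ^ 2 := by ring
    have h2 : c ^ 2 / 2 ≤ ‖e t‖ ^ 2 := by
      have := hlb t ht
      have h3 : (c / Real.sqrt 2) ^ 2 ≤ ‖e t‖ ^ 2 := by
        apply pow_le_pow_left₀ (by positivity) this
      have hs : (Real.sqrt 2) ^ 2 = 2 := Real.sq_sqrt (by norm_num)
      rw [div_pow, hs] at h3
      exact h3
    have h4 : (inner ℝ (e t) (k • e t) : ℝ) = k * ‖e t‖ ^ 2 := by
      rw [real_inner_smul_right, real_inner_self_eq_norm_sq]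
    rw [inner_sub_right, h4]
    have h5 : k * (c ^ 2 / 2) ≤ k * ‖e t‖ ^ 2 :=
      mul_le_mul_of_nonneg_left h2 (by linarith)
    nlinarith
  refine ⟨fun t ht => ⟨_, key t ht, bound t ht, hnpos⟩, ?_, ?_⟩
  · have anti : AntitoneOn (fun s => (1 / 2) * ‖e s‖ ^ 2) (Icc a b) := by
      apply antitoneOn_of_hasDerivWithinAt_nonpos (convex_Icc a b)
        (f' := fun t => (inner ℝ (e t) (v t - k • e t) : ℝ))
      · exact fun t ht => (key t ht).continuousWithinAt
      · intro t ht
        exact (key t (interior_subset ht)).mono interior_subset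
      · intro t ht
        exact le_trans (bound t (interior_subset ht)) hnpos
    intro x hx y hy hxy
    have := anti hx hy hxy
    simpa using by linarith [this]
  · have anti : AntitoneOn (fun s => (1 / 2) * ‖e s‖ ^ 2) (Icc a b) := by
      apply antitoneOn_of_hasDerivWithinAt_nonpos (convex_Icc a b)
        (f' := fun t => (inner ℝ (e t) (v t - k • e t) : ℝ))
      · exact fun t ht => (key t ht).continuousWithinAt
      · intro t ht
        exact (key t (interior_subset ht)).mono interior_subset
      · intro t ht
        exact le_trans (bound t (interior_subset ht)) hnpos
    have h := anti (left_mem_Icc.2 hab) (right_mem_Icc.2 hab) hab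
    simp only at h
    have : ‖e b‖ ^ 2 ≤ ‖e a‖ ^ 2 := by linarith
    exact pow_le_pow_iff_left₀ (norm_nonneg _) (norm_nonneg _) (by norm_num) |>.1 this
end

section
/- Let m ∈ ℕ, ε > 0, a < b ≤ ∞, and let w : [a, b) → ℝ^m be locally absolutely continuous with ‖w(a)‖ < ε. Suppose that for almost every t ∈ [a, b) with ‖w(t)‖ ≥ ε one has ⟨w(t), w'(t)⟩ ≤ 0. Then ‖w(t)‖ ≤ ε for all t ∈ [a, b). -/
open Set MeasureTheory

local notation "⟪" x ", " y "⟫" => @inner ℝ _ _ x y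

variable {E : Type*} [NormedAddCommGroup E] [InnerProductSpace ℝ E] [CompleteSpace E]

lemma key_sq (f : ℝ → E) (c t : ℝ) (hi : IntegrableOn f (Ioc c t)) :
    2 * ∫ s in Ioc c t, ⟪∫ u in Ioc c s, f u, f s⟫ = ‖∫ u in Ioc c t, f u‖ ^ 2 := by
  set μ := volume.restrict (Ioc c t) with hμ
  have hfi : Integrable f μ := hi
  set K : ℝ × ℝ → ℝ := fun z => ⟪f z.2, f z.1⟫ with hK
  have hKm : AEStronglyMeasurable K (μ.prod μ) :=
    (hfi.aestronglyMeasurable.comp_snd).inner (hfi.aestronglyMeasurable.comp_fst)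
  have hKi : Integrable K (μ.prod μ) := by
    refine (hfi.norm.mul_prod hfi.norm).mono' hKm (Filter.Eventually.of_forall fun z => ?_)
    calc ‖K z‖ ≤ ‖f z.2‖ * ‖f z.1‖ := norm_inner_le_norm _ _
    _ = ‖f z.1‖ * ‖f z.2‖ := mul_comm _ _
  have hS1 : MeasurableSet {p : ℝ × ℝ | p.2 < p.1} :=
    measurableSet_lt measurable_snd measurable_fst
  have hS2 : MeasurableSet {p : ℝ × ℝ | p.1 ≤ p.2} :=
    measurableSet_le measurable_fst measurable_snd
  have hI1 : Integrable ({p : ℝ × ℝ | p.2 < p.1}.indicator K) (μ.prod μ) := hKi.indicator hS1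
  have hI2 : Integrable ({p : ℝ × ℝ | p.1 ≤ p.2}.indicator K) (μ.prod μ) := hKi.indicator hS2
  have hA : (∫ z, ({p : ℝ × ℝ | p.2 < p.1}.indicator K) z ∂(μ.prod μ))
      = ∫ s in Ioc c t, ⟪∫ u in Ioc c s, f u, f s⟫ := by
    rw [integral_prod _ hI1]
    refine integral_congr_ae ?_
    filter_upwards [ae_restrict_mem measurableSet_Ioc] with s hs
    have h1 : (fun u => ({p : ℝ × ℝ | p.2 < p.1}.indicator K) (s, u))
        = (Iio s).indicator (fun u => ⟪f s, f u⟫) := by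
      funext u; by_cases h : u < s <;>
        simp [Set.indicator_apply, h, hK, real_inner_comm (f u) (f s)]
    rw [h1, integral_indicator measurableSet_Iio]
    rw [hμ, Measure.restrict_restrict measurableSet_Iio]
    have h2 : Iio s ∩ Ioc c t = Ioo c s := by
      ext u; simp only [mem_inter_iff, mem_Iio, mem_Ioc, mem_Ioo]
      constructor
      · rintro ⟨h1, h2, h3⟩; exact ⟨h2, h1⟩
      · rintro ⟨h1, h2⟩; exact ⟨h2, h1, (h2.le.trans hs.2)⟩
    rw [h2, ← integral_Ioc_eq_integral_Ioo,
      integral_inner (hi.mono_set (Ioc_subset_Ioc_right hs.2)) (f s),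
      real_inner_comm]
  have hB : (∫ z, ({p : ℝ × ℝ | p.1 ≤ p.2}.indicator K) z ∂(μ.prod μ))
      = ∫ s in Ioc c t, ⟪∫ u in Ioc c s, f u, f s⟫ := by
    rw [integral_prod_symm _ hI2]
    refine integral_congr_ae ?_
    filter_upwards [ae_restrict_mem measurableSet_Ioc] with s hs
    have h1 : (fun u => ({p : ℝ × ℝ | p.1 ≤ p.2}.indicator K) (u, s))
        = (Iic s).indicator (fun u => ⟪f s, f u⟫) := by
      funext u; by_cases h : u ≤ s <;> simp [Set.indicator_apply, h, hK]
    rw [h1, integral_indicator measurableSet_Iic]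
    rw [hμ, Measure.restrict_restrict measurableSet_Iic]
    have h2 : Iic s ∩ Ioc c t = Ioc c s := by
      ext u; simp only [mem_inter_iff, mem_Iic, mem_Ioc]
      constructor
      · rintro ⟨h1, h2, h3⟩; exact ⟨h2, h1⟩
      · rintro ⟨h1, h2⟩; exact ⟨h2, h1, h2.trans hs.2⟩
    rw [h2, integral_inner (hi.mono_set (Ioc_subset_Ioc_right hs.2)) (f s),
      real_inner_comm]
  have hT : (∫ z, K z ∂(μ.prod μ)) = ‖∫ u in Ioc c t, f u‖ ^ 2 := by
    rw [integral_prod _ hKi]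
    have h1 : ∀ s : ℝ, (∫ u, K (s, u) ∂μ) = (⟪f s, ∫ u in Ioc c t, f u⟫ : ℝ) := fun s => by
      have he : (fun u => K (s, u)) = fun u => (⟪f s, f u⟫ : ℝ) := by
        funext u; exact real_inner_comm _ _
      rw [he]; exact integral_inner hfi (f s)
    simp_rw [h1]
    have h2 : (fun s => (⟪f s, ∫ u in Ioc c t, f u⟫ : ℝ))
        = fun s => ⟪∫ u in Ioc c t, f u, f s⟫ := by
      funext s; exact real_inner_comm _ _
    rw [h2, integral_inner hfi, real_inner_self_eq_norm_sq]
  have hsum : (∫ z, ({p : ℝ × ℝ | p.2 < p.1}.indicator K) z ∂(μ.prod μ))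
      + (∫ z, ({p : ℝ × ℝ | p.1 ≤ p.2}.indicator K) z ∂(μ.prod μ))
      = ∫ z, K z ∂(μ.prod μ) := by
    rw [← integral_add hI1 hI2]
    refine integral_congr_ae (Filter.Eventually.of_forall fun z => ?_)
    by_cases h : z.2 < z.1
    · simp [Set.indicator_apply, h, not_le.2 h]
    · simp [Set.indicator_apply, h, not_lt.1 h]
  rw [hA, hB, hT] at hsum
  linarith [hsum]

lemma key_bridge (w f : ℝ → E) (c t : ℝ) (hct : c ≤ t) (hi : IntegrableOn f (Ioc c t))
    (hw : ∀ s ∈ Ioc c t, w s = w c + ∫ u in Ioc c s, f u) :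
    ‖w t‖ ^ 2 - ‖w c‖ ^ 2 = 2 * ∫ s in Ioc c t, ⟪w s, f s⟫ := by
  rcases eq_or_lt_of_le hct with rfl | hlt
  · simp
  set F : ℝ → E := fun s => ∫ u in Ioc c s, f u with hF
  set Ft : E := ∫ u in Ioc c t, f u with hFt
  -- integrability of s ↦ ⟪F s, f s⟫
  have hFc : ContinuousOn F (Icc c t) :=
    intervalIntegral.continuousOn_primitive ((integrableOn_Icc_iff_integrableOn_Ioc).2 hi)
  have hFm : AEStronglyMeasurable F (volume.restrict (Ioc c t)) :=
    (hFc.mono Ioc_subset_Icc_self).aestronglyMeasurable measurableSet_Ioc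
  have hg2 : Integrable (fun s => (⟪F s, f s⟫ : ℝ)) (volume.restrict (Ioc c t)) := by
    have hb : Integrable (fun s => (∫ u in Ioc c t, ‖f u‖) * ‖f s‖)
        (volume.restrict (Ioc c t)) := hi.norm.const_mul _
    refine hb.mono' (hFm.inner hi.aestronglyMeasurable) ?_
    filter_upwards [ae_restrict_mem measurableSet_Ioc] with s hs
    calc ‖(⟪F s, f s⟫ : ℝ)‖ ≤ ‖F s‖ * ‖f s‖ := norm_inner_le_norm _ _
    _ ≤ (∫ u in Ioc c t, ‖f u‖) * ‖f s‖ := by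
        refine mul_le_mul_of_nonneg_right ?_ (norm_nonneg _)
        calc ‖F s‖ ≤ ∫ u in Ioc c s, ‖f u‖ := norm_integral_le_integral_norm _
        _ ≤ ∫ u in Ioc c t, ‖f u‖ := by
            refine setIntegral_mono_set hi.norm ?_ ?_
            · exact Filter.Eventually.of_forall fun u => norm_nonneg _
            · exact HasSubset.Subset.eventuallyLE (Ioc_subset_Ioc_right hs.2)
  have hg1 : Integrable (fun s => (⟪w c, f s⟫ : ℝ)) (volume.restrict (Ioc c t)) :=
    hi.const_inner _
  have hsplit : (∫ s in Ioc c t, (⟪w s, f s⟫ : ℝ))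
      = (∫ s in Ioc c t, (⟪w c, f s⟫ : ℝ)) + ∫ s in Ioc c t, (⟪F s, f s⟫ : ℝ) := by
    rw [← integral_add hg1 hg2]
    refine integral_congr_ae ?_
    filter_upwards [ae_restrict_mem measurableSet_Ioc] with s hs
    rw [hw s hs, inner_add_left]
  have h1 : (∫ s in Ioc c t, (⟪w c, f s⟫ : ℝ)) = ⟪w c, Ft⟫ := integral_inner hi _
  have h2 : 2 * (∫ s in Ioc c t, (⟪F s, f s⟫ : ℝ)) = ‖Ft‖ ^ 2 := key_sq f c t hi
  have hwt : w t = w c + Ft := hw t ⟨hlt, le_rfl⟩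
  rw [hwt, hsplit, h1]
  rw [norm_add_sq_real]
  linarith [h2]

theorem stmt9 (m : ℕ) (ε : ℝ) (hε : 0 < ε) (a : ℝ) (b : EReal) (hab : (a : EReal) < b)
    (w w' : ℝ → EuclideanSpace ℝ (Fin m))
    -- S = [a, b):
    (S : Set ℝ) (hS : S = {t : ℝ | a ≤ t ∧ (t : EReal) < b})
    -- w is locally absolutely continuous on [a, b): it is differentiable a.e.
    -- with derivative w' and satisfies the FTC on compact subintervals:
    (hInt : ∀ t ∈ S, IntervalIntegrable w' volume a t)
    (hFTC : ∀ t ∈ S, w t = w a + ∫ s in a..t, w' s)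
    (hderiv : ∀ᵐ t ∂(volume.restrict S), HasDerivAt w (w' t) t)
    (hwa : ‖w a‖ < ε)
    -- for a.e. t ∈ [a,b) with ‖w(t)‖ ≥ ε one has ⟨w(t), w'(t)⟩ ≤ 0:
    (hdecr : ∀ᵐ t ∂(volume.restrict S), ε ≤ ‖w t‖ → (inner ℝ (w t) (w' t) : ℝ) ≤ 0) :
    ∀ t ∈ S, ‖w t‖ ≤ ε := by
  intro T hT
  rw [hS] at hT
  obtain ⟨haT, hTb⟩ := hT
  have hmemS : ∀ s, a ≤ s → s ≤ T → s ∈ S := fun s h1 h2 => by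
    rw [hS]; exact ⟨h1, lt_of_le_of_lt (EReal.coe_le_coe_iff.2 h2) hTb⟩
  have hiT : IntervalIntegrable w' volume a T := hInt T (hmemS T haT le_rfl)
  -- continuity of w on [a, T]
  have hprim : ContinuousOn (fun s => w a + ∫ u in a..s, w' u) (Icc a T) := by
    refine continuousOn_const.add ?_
    have := intervalIntegral.continuousOn_primitive_interval
      (f := w') (a := a) (b := T) (μ := volume) ?_
    · rwa [uIcc_of_le haT] at this
    · rw [uIcc_of_le haT]
      exact (intervalIntegrable_iff_integrableOn_Icc_of_le haT).1 hiT
  have hcw : ContinuousOn w (Icc a T) :=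
    hprim.congr fun s hs => hFTC s (hmemS s hs.1 hs.2)
  by_contra h
  push_neg at h
  -- the last time ‖w‖ ≤ ε before T
  set Es : Set ℝ := Icc a T ∩ (fun s => ‖w s‖) ⁻¹' Iic ε with hEs
  have hEclosed : IsClosed Es :=
    hcw.norm.preimage_isClosed_of_isClosed isClosed_Icc isClosed_Iic
  have haE : a ∈ Es := ⟨⟨le_rfl, haT⟩, hwa.le⟩
  have hbdd : BddAbove Es := ⟨T, fun s hs => hs.1.2⟩
  set c := sSup Es with hc
  have hcE : c ∈ Es := hEclosed.csSup_mem ⟨a, haE⟩ hbdd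
  have hac : a ≤ c := hcE.1.1
  have hcT : c ≤ T := hcE.1.2
  have hwc : ‖w c‖ ≤ ε := hcE.2
  have hgt : ∀ s ∈ Ioc c T, ε < ‖w s‖ := by
    intro s hs
    by_contra hle
    push_neg at hle
    exact absurd (le_csSup hbdd ⟨⟨hac.trans hs.1.le, hs.2⟩, hle⟩) (not_le.2 hs.1)
  have hi' : IntegrableOn w' (Ioc c T) :=
    ((intervalIntegrable_iff_integrableOn_Ioc_of_le haT).1 hiT).mono_set
      (Ioc_subset_Ioc_left hac)
  have hrep : ∀ s ∈ Ioc c T, w s = w c + ∫ u in Ioc c s, w' u := by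
    intro s hs
    have hasle : a ≤ s := hac.trans hs.1.le
    rw [hFTC s (hmemS s hasle hs.2), hFTC c (hmemS c hac hcT)]
    have h1 : IntervalIntegrable w' volume a c := hiT.mono_set (by
      rw [uIcc_of_le hac, uIcc_of_le haT]; exact Icc_subset_Icc_right hcT)
    have h2 : IntervalIntegrable w' volume c s := hiT.mono_set (by
      rw [uIcc_of_le hs.1.le, uIcc_of_le haT]; exact Icc_subset_Icc hac hs.2)
    rw [← intervalIntegral.integral_add_adjacent_intervals h1 h2,
      intervalIntegral.integral_of_le hs.1.le]
    abel
  have hkey : ‖w T‖ ^ 2 - ‖w c‖ ^ 2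
      = 2 * ∫ s in Ioc c T, (inner ℝ (w s) (w' s) : ℝ) :=
    key_bridge w w' c T hcT hi' hrep
  have hsub : Ioc c T ⊆ S := fun s hs => hmemS s (hac.trans hs.1.le) hs.2
  have hnonpos : (∫ s in Ioc c T, (inner ℝ (w s) (w' s) : ℝ)) ≤ 0 := by
    refine integral_nonpos_of_ae ?_
    filter_upwards [ae_restrict_mem measurableSet_Ioc,
      ae_restrict_of_ae_restrict_of_subset hsub hdecr] with s hs himp
    exact himp (hgt s hs).le
  have h1 : ε ^ 2 < ‖w T‖ ^ 2 := by nlinarith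
  have h2 : ‖w c‖ ^ 2 ≤ ε ^ 2 := by nlinarith [norm_nonneg (w c)]
  linarith
end
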